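/- Let $D \ge 1$ and define $\mathcal{D}^+(D)$ as the set of squarefree integers $p_1\cdots p_r$ with primes $D^{1/2} \ge p_1 \ge \cdots \ge p_r$ such that $p_1\cdots p_{l-1} p_l^3 \le D$ for each odd $l \le r$ (the empty product $1$ belongs to $\mathcal{D}^+(D)$). Then for any $d = p_1 \cdots p_r \in \mathcal{D}^+(D)$ with $p_1 \ge \cdots \ge p_r$ and any $m \le r$, one has $p_1 \cdots p_m < D^{1 - 2^{-m}}$. -/

import Mathlib

/-- For `d = p₁⋯p_r ∈ 𝒟⁺(D)` (decreasing primes `≤ D^(1/2)` with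
`p₁⋯p_{l-1}p_l³ ≤ D` for odd `l`), the product of the `m` largest prime
factors satisfies `p₁⋯p_m < D^(1-2^{-m})`. -/
theorem stmt_2 (D : ℝ) (hD : 1 ≤ D) (L : List ℕ)
    (hprime : ∀ p ∈ L, Nat.Prime p)
    (hsorted : L.Pairwise (· ≥ ·))
    (hsize : ∀ p ∈ L, (p : ℝ) ≤ D ^ ((1:ℝ)/2))
    (hplus : ∀ l (hl : l < L.length), Odd (l + 1) →
      ((L.take l).prod : ℝ) * ((L.get ⟨l, hl⟩ : ℕ) : ℝ)^3 ≤ D) :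
    ∀ m, 1 ≤ m → m ≤ L.length →
      ((L.take m).prod : ℝ) < D ^ (1 - (2:ℝ) ^ (-(m:ℝ))) := by
  have hDpos : (0:ℝ) < D := lt_of_lt_of_le one_pos hD
  intro m hm1 hmlen
  have hlen0 : 0 < L.length := lt_of_lt_of_le hm1 hmlen
  have hD1 : (1:ℝ) < D := by
    have hp0 : Nat.Prime (L.get ⟨0, hlen0⟩) := hprime _ (L.get_mem _)
    have h2 : (2:ℝ) ≤ ((L.get ⟨0, hlen0⟩ : ℕ) : ℝ) := by exact_mod_cast hp0.two_le
    have h := hplus 0 hlen0 (by norm_num)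
    simp only [List.take_zero, List.prod_nil, Nat.cast_one, one_mul] at h
    have h8 : (2:ℝ)^3 ≤ ((L.get ⟨0, hlen0⟩ : ℕ) : ℝ)^3 :=
      pow_le_pow_left₀ (by norm_num) h2 3
    norm_num only at h8
    linarith
  have hPpos : ∀ n, (1:ℝ) ≤ ((L.take n).prod : ℝ) := by
    intro n
    have : 0 < (L.take n).prod := by
      apply List.prod_pos
      intro a ha
      exact (hprime a (List.take_subset n L ha)).pos
    exact_mod_cast this
  have htwo : ∀ (n : ℕ) (hn : n < L.length), (2:ℝ) ≤ ((L.get ⟨n, hn⟩ : ℕ) : ℝ) := by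
    intro n hn
    exact_mod_cast (hprime _ (L.get_mem _)).two_le
  have hhalf : ∀ k : ℕ, (2:ℝ) ^ (-((k:ℝ)+1)) = (2:ℝ) ^ (-(k:ℝ)) * 2⁻¹ := by
    intro k
    rw [← Real.rpow_neg_one 2, ← Real.rpow_add (by norm_num : (0:ℝ) < 2)]
    ring_nf
  have key : ∀ n, n ≤ L.length →
      ((L.take n).prod : ℝ) ≤ D ^ (1 - (2:ℝ) ^ (-(n:ℝ))) ∧
      (1 ≤ n → ((L.take n).prod : ℝ) < D ^ (1 - (2:ℝ) ^ (-(n:ℝ)))) := by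
    intro n
    induction n using Nat.strong_induction_on with
    | _ n ih =>
      intro hn
      match n with
      | 0 =>
        constructor
        · simp
        · omega
      | Nat.succ n =>
        have hnlt : n < L.length := hn
        set p : ℝ := ((L.get ⟨n, hnlt⟩ : ℕ) : ℝ) with hp
        have hp2 : (2:ℝ) ≤ p := htwo n hnlt
        have hsplitN : (L.take (n+1)).prod = (L.take n).prod * (L.get ⟨n, hnlt⟩) :=
          List.prod_take_succ L n hnlt
        have hsplit : ((L.take (n+1)).prod : ℝ) = ((L.take n).prod : ℝ) * p := by
          rw [hsplitN]; push_cast; rw [hp]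
        -- the cube bound, uniform in parity
        have hcube : ((L.take (n+1)).prod : ℝ) ^ 3 ≤ D ^ (3 - 2 * (2:ℝ) ^ (-(n:ℝ))) := by
          rcases Nat.even_or_odd n with he | ho
          · -- n even, n+1 odd : use hplus at n
            have h := hplus n hnlt (Even.add_one he)
            rw [← hp] at h
            have hih := (ih n (Nat.lt_succ_self n) (le_of_lt hnlt)).1
            set P : ℝ := ((L.take n).prod : ℝ) with hP
            set A : ℝ := D ^ (1 - (2:ℝ) ^ (-(n:ℝ))) with hA
            have hP1 : (1:ℝ) ≤ P := hPpos n
            have hA1 : (0:ℝ) ≤ A := le_trans (by linarith) hih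
            have hAeq : A ^ 2 * D = D ^ (3 - 2 * (2:ℝ) ^ (-(n:ℝ))) := by
              rw [hA, ← Real.rpow_natCast (D ^ (1 - (2:ℝ) ^ (-(n:ℝ)))) 2,
                ← Real.rpow_mul (le_of_lt hDpos),
                show (3 - 2 * (2:ℝ) ^ (-(n:ℝ)))
                  = (1 - (2:ℝ) ^ (-(n:ℝ))) * ((2:ℕ):ℝ) + 1 by push_cast; ring,
                Real.rpow_add hDpos, Real.rpow_one]
            calc ((L.take (n+1)).prod : ℝ) ^ 3 = P ^ 2 * (P * p ^ 3) := by
                  rw [hsplit]; ring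
              _ ≤ P ^ 2 * D := mul_le_mul_of_nonneg_left h (by positivity)
              _ ≤ A ^ 2 * D :=
                  mul_le_mul_of_nonneg_right (pow_le_pow_left₀ (by linarith) hih 2)
                    (le_of_lt hDpos)
              _ = _ := hAeq
          · -- n odd : n = k+1, use hplus at k
            obtain ⟨k, rfl⟩ : ∃ k, n = k + 1 := ⟨n - 1, (Nat.succ_pred_eq_of_pos ho.pos).symm⟩
            have hklt : k < L.length := lt_trans (Nat.lt_succ_self k) hnlt
            have h := hplus k hklt ho
            set q : ℝ := ((L.get ⟨k, hklt⟩ : ℕ) : ℝ) with hq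
            have hq2 : (2:ℝ) ≤ q := htwo k hklt
            have hqp : p ≤ q := by
              have := hsorted.rel_get_of_lt (a := ⟨k, hklt⟩) (b := ⟨k+1, hnlt⟩)
                (by simp [Fin.lt_def])
              rw [hp, hq]
              exact_mod_cast this
            have hsplit2N : (L.take (k+1)).prod = (L.take k).prod * (L.get ⟨k, hklt⟩) :=
              List.prod_take_succ L k hklt
            have hsplit2 : ((L.take (k+1)).prod : ℝ) = ((L.take k).prod : ℝ) * q := by
              rw [hsplit2N]; push_cast; rw [hq]
            have hih := (ih k (by omega) (le_of_lt hklt)).1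
            set Q : ℝ := ((L.take k).prod : ℝ) with hQ
            have hQ1 : (1:ℝ) ≤ Q := hPpos k
            set A : ℝ := D ^ (1 - (2:ℝ) ^ (-(k:ℝ))) with hA
            have hAeq : A * D ^ 2 = D ^ (3 - 2 * (2:ℝ) ^ (-((k:ℝ)+1))) := by
              rw [hA, ← Real.rpow_natCast D 2, ← Real.rpow_add hDpos, hhalf k]
              congr 1
              push_cast
              ring
            have hexpcast : (2:ℝ) ^ (-(((k:ℕ)+1:ℕ):ℝ)) = (2:ℝ) ^ (-((k:ℝ)+1)) := by
              norm_num
            rw [hexpcast]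
            calc ((L.take (k+1+1)).prod : ℝ) ^ 3 = (Q * q * p) ^ 3 := by
                  rw [hsplit, hsplit2]
              _ ≤ (Q * q * q) ^ 3 := by
                  apply pow_le_pow_left₀ (by positivity)
                  exact mul_le_mul_of_nonneg_left hqp (by positivity)
              _ = Q * (Q * q ^ 3) ^ 2 := by ring
              _ ≤ Q * D ^ 2 :=
                  mul_le_mul_of_nonneg_left (pow_le_pow_left₀ (by positivity) h 2)
                    (by linarith)
              _ ≤ A * D ^ 2 := mul_le_mul_of_nonneg_right hih (by positivity)
              _ = _ := hAeq
        -- take cube roots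
        set e : ℝ := 1 - (2:ℝ)/3 * (2:ℝ) ^ (-(n:ℝ)) with he
        have hcube' : ((L.take (n+1)).prod : ℝ) ^ 3 ≤ (D ^ e) ^ 3 := by
          have h3 : (D ^ e) ^ (3:ℕ) = D ^ (3 - 2 * (2:ℝ) ^ (-(n:ℝ))) := by
            rw [← Real.rpow_natCast (D ^ e) 3, ← Real.rpow_mul (le_of_lt hDpos)]
            congr 1
            rw [he]; push_cast; ring
          calc ((L.take (n+1)).prod : ℝ) ^ 3 ≤ D ^ (3 - 2 * (2:ℝ) ^ (-(n:ℝ))) := hcube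
            _ = (D ^ e) ^ 3 := h3.symm
        have hle : ((L.take (n+1)).prod : ℝ) ≤ D ^ e :=
          le_of_pow_le_pow_left₀ (by norm_num) (Real.rpow_nonneg (le_of_lt hDpos) e) hcube'
        have hexp : e < 1 - (2:ℝ) ^ (-((n:ℝ)+1)) := by
          have h2n : (0:ℝ) < (2:ℝ) ^ (-(n:ℝ)) := Real.rpow_pos_of_pos (by norm_num) _
          rw [he, hhalf n]
          nlinarith
        have hlt : ((L.take (n+1)).prod : ℝ) < D ^ (1 - (2:ℝ) ^ (-((n:ℝ)+1))) :=
          lt_of_le_of_lt hle ((Real.rpow_lt_rpow_left_iff hD1).mpr hexp)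
        have hcast : (((n+1:ℕ)):ℝ) = (n:ℝ) + 1 := by push_cast; ring
        constructor
        · rw [show ((n.succ : ℕ):ℝ) = (n:ℝ)+1 from hcast]
          exact le_of_lt hlt
        · intro _
          rw [show ((n.succ : ℕ):ℝ) = (n:ℝ)+1 from hcast]
          exact hlt
  exact (key m hmlen).2 hm1
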